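/- Let A be a category in which, for every pair of objects a and b, the automorphism group Aut(b) acts by post-composition on the morphism set Hom_A(a,b), and this action is free and transitive whenever Hom_A(a,b) is nonempty. Then for every morphism f : a → b there exists a unique group homomorphism Aut(f) : Aut(a) → Aut(b) such that f ∘ u = Aut(f)(u) ∘ f for every automorphism u ∈ Aut(a). -/

import Mathlib

open CategoryTheory

/-- In a category where, for every pair of objects `a`, `b`, the group `Aut b` acts
by post-composition on `Hom(a,b)` freely and transitively whenever `Hom(a,b)` is nonempty,
every morphism `f : a ⟶ b` determines a unique group homomorphism
`Aut f : Aut a →* Aut b` with `f ∘ u = (Aut f) u ∘ f` for all `u ∈ Aut a`. -/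
theorem chart_category_aut_hom {A : Type*} [Category A]
    (htrans : ∀ (a b : A) (f g : a ⟶ b), ∃ v : Aut b, f ≫ v.hom = g)
    (hfree : ∀ (a b : A) (f : a ⟶ b) (v : Aut b), f ≫ v.hom = f → v = 1)
    {a b : A} (f : a ⟶ b) :
    ∃! φ : Aut a →* Aut b, ∀ u : Aut a, u.hom ≫ f = f ≫ (φ u).hom := by
  have huniq : ∀ (v w : Aut b), f ≫ v.hom = f ≫ w.hom → v = w := by
    intro v w h
    have h1 : f ≫ (w⁻¹ * v).hom = f := by
      change f ≫ (v.hom ≫ (w⁻¹ : Aut b).hom) = f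
      rw [← Category.assoc, h, Category.assoc]
      exact (congrArg (f ≫ ·) (Iso.hom_inv_id (X := b) (Y := b) w)).trans (Category.comp_id f)
    have := hfree a b f _ h1
    have : v = w * (w⁻¹ * v) := by group
    rw [this, hfree a b f _ h1, mul_one]
  choose g hg using fun u : Aut a => htrans a b f (u.hom ≫ f)
  have hmul : ∀ u v : Aut a, g (u * v) = g u * g v := by
    intro u v
    apply huniq
    rw [hg]
    change (v.hom ≫ u.hom) ≫ f = f ≫ ((g v).hom ≫ (g u).hom)
    simp only [← Category.assoc]
    rw [hg v]
    simp only [Category.assoc]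
    rw [hg u]
  refine ⟨MonoidHom.mk' g hmul, fun u => (hg u).symm, ?_⟩
  intro ψ hψ
  ext u
  exact congrArg Iso.hom (huniq (ψ u) (g u) (by rw [hg u, hψ u]))
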